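/- Let γ : [0,1] → ℝ² be a continuous curve whose length (total variation) is at most 1. Then the set of pairs (i,j) ∈ ℤ² such that the image of γ intersects the open square (i,i+1) × (j,j+1) has cardinality at most 4. -/

import Mathlib

/-- The open unit grid square with lower-left corner `(i, j)`. -/
def openGridSquare (i j : ℤ) : Set (EuclideanSpace ℝ (Fin 2)) :=
  {p | p 0 ∈ Set.Ioo (i : ℝ) (i + 1) ∧ p 1 ∈ Set.Ioo (j : ℝ) (j + 1)}

lemma coord_dist_le (x y : EuclideanSpace ℝ (Fin 2)) (k : Fin 2) :
    dist (x k) (y k) ≤ dist x y := by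
  rw [EuclideanSpace.dist_eq]
  rw [show dist (x k) (y k) = √(dist (x k) (y k) ^ 2) by
    rw [Real.sqrt_sq dist_nonneg]]
  apply Real.sqrt_le_sqrt
  exact Finset.single_le_sum (f := fun i => dist (x i) (y i) ^ 2)
    (fun i _ => sq_nonneg _) (Finset.mem_univ k)

lemma int_close {a b : ℤ} {x y : ℝ}
    (hx : x ∈ Set.Ioo (a : ℝ) (a + 1)) (hy : y ∈ Set.Ioo (b : ℝ) (b + 1))
    (h : |x - y| ≤ 1) : a = b - 1 ∨ a = b ∨ a = b + 1 := by
  have h1 : x - y ≤ 1 := (abs_le.mp h).2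
  have h2 : -(1 : ℝ) ≤ x - y := (abs_le.mp h).1
  have hb : b ≤ a + 1 := by
    have : (b : ℝ) < a + 2 := by
      have := hx.2; have := hy.1; linarith
    have hb2 : b < a + 2 := by exact_mod_cast this
    omega
  have ha : a ≤ b + 1 := by
    have : (a : ℝ) < b + 2 := by
      have := hx.1; have := hy.2; linarith
    have ha2 : a < b + 2 := by exact_mod_cast this
    omega
  omega

/-- A continuous curve in the plane of length (total variation) at most 1 meets the interiors
of at most 4 of the unit grid squares. -/
theorem curve_meets_at_most_four_squares (γ : ℝ → EuclideanSpace ℝ (Fin 2))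
    (hcont : ContinuousOn γ (Set.Icc 0 1))
    (hlen : eVariationOn γ (Set.Icc 0 1) ≤ 1) :
    {ij : ℤ × ℤ | (γ '' Set.Icc 0 1 ∩ openGridSquare ij.1 ij.2).Nonempty}.encard ≤ 4 := by
  set S := {ij : ℤ × ℤ | (γ '' Set.Icc 0 1 ∩ openGridSquare ij.1 ij.2).Nonempty} with hS
  -- distance between any two image points is at most 1
  have hdist : ∀ x ∈ γ '' Set.Icc 0 1, ∀ y ∈ γ '' Set.Icc 0 1, dist x y ≤ 1 := by
    rintro x ⟨s, hs, rfl⟩ y ⟨t, ht, rfl⟩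
    have h := (eVariationOn.edist_le γ hs ht).trans hlen
    have : (edist (γ s) (γ t)).toReal ≤ (1 : ENNReal).toReal :=
      ENNReal.toReal_mono (by norm_num) h
    simpa [dist_edist] using this
  -- key: indices of any two squares met are within 1 in each coordinate
  have key : ∀ p ∈ S, ∀ q ∈ S,
      (p.1 = q.1 - 1 ∨ p.1 = q.1 ∨ p.1 = q.1 + 1) ∧
      (p.2 = q.2 - 1 ∨ p.2 = q.2 ∨ p.2 = q.2 + 1) := by
    rintro p ⟨x, hx1, hx2⟩ q ⟨y, hy1, hy2⟩
    have hd := hdist x hx1 y hy1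
    have h0 : |x 0 - y 0| ≤ 1 := by
      have := (coord_dist_le x y 0).trans hd
      simpa [Real.dist_eq] using this
    have h1 : |x 1 - y 1| ≤ 1 := by
      have := (coord_dist_le x y 1).trans hd
      simpa [Real.dist_eq] using this
    exact ⟨int_close hx2.1 hy2.1 h0, int_close hx2.2 hy2.2 h1⟩
  rcases Set.eq_empty_or_nonempty S with hE | ⟨⟨i0, j0⟩, hij0⟩
  · simp [hE]
  · -- choose base indices
    classical
    set a : ℤ := if ∃ q ∈ S, q.1 = i0 - 1 then i0 - 1 else i0 with ha
    set b : ℤ := if ∃ q ∈ S, q.2 = j0 - 1 then j0 - 1 else j0 with hb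
    have hsub : S ⊆ ({a, a + 1} : Set ℤ) ×ˢ ({b, b + 1} : Set ℤ) := by
      rintro ⟨i, j⟩ hq
      have h1 := key _ hq _ hij0
      constructor
      · show i ∈ ({a, a + 1} : Set ℤ)
        have h3 := h1.1
        by_cases hc : ∃ q ∈ S, q.1 = i0 - 1
        · obtain ⟨r, hr, hr1⟩ := hc
          have h2 := (key _ hq _ hr).1
          rw [hr1] at h2
          rw [ha, if_pos ⟨r, hr, hr1⟩]
          simp only [Set.mem_insert_iff, Set.mem_singleton_iff]
          omega
        · rw [ha, if_neg hc]
          simp only [Set.mem_insert_iff, Set.mem_singleton_iff]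
          rcases h3 with h | h | h
          · exact absurd (⟨(i, j), hq, h⟩ : ∃ q ∈ S, q.1 = i0 - 1) hc
          · exact Or.inl h
          · exact Or.inr h
      · show j ∈ ({b, b + 1} : Set ℤ)
        have h3 := h1.2
        by_cases hc : ∃ q ∈ S, q.2 = j0 - 1
        · obtain ⟨r, hr, hr1⟩ := hc
          have h2 := (key _ hq _ hr).2
          rw [hr1] at h2
          rw [hb, if_pos ⟨r, hr, hr1⟩]
          simp only [Set.mem_insert_iff, Set.mem_singleton_iff]
          omega
        · rw [hb, if_neg hc]
          simp only [Set.mem_insert_iff, Set.mem_singleton_iff]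
          rcases h3 with h | h | h
          · exact absurd (⟨(i, j), hq, h⟩ : ∃ q ∈ S, q.2 = j0 - 1) hc
          · exact Or.inl h
          · exact Or.inr h
    calc S.encard ≤ (({a, a + 1} : Set ℤ) ×ˢ ({b, b + 1} : Set ℤ)).encard :=
          Set.encard_mono hsub
      _ ≤ 4 := by
          have : (({a, a + 1} : Set ℤ) ×ˢ ({b, b + 1} : Set ℤ)) ⊆
              {(a, b), (a, b + 1), (a + 1, b), (a + 1, b + 1)} := by
            rintro ⟨u, v⟩ ⟨hu, hv⟩
            simp only [Set.mem_insert_iff, Set.mem_singleton_iff] at hu hv ⊢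
            rcases hu with rfl | rfl <;> rcases hv with rfl | rfl <;> simp [Prod.ext_iff]
          refine (Set.encard_mono this).trans ?_
          refine (Set.encard_insert_le _ _).trans ?_
          refine (add_le_add_left (Set.encard_insert_le _ _) 1).trans ?_
          refine (add_le_add_left (add_le_add_left (Set.encard_insert_le _ _) 1) 1).trans ?_
          simp [Set.encard_singleton]
          rfl
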